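/- There is an absolute constant c > 0 such that for every integer k ≥ 0 and every analytic polynomial φ(z) = Σ_{n≥0} φ̂(n) z^n, one has sup_{|z|=1} |Σ_{j≥0} α_{jk}·φ̂(j + k + 1)·z^j| ≤ c·sup_{|z|=1} |φ(z)|, where α_{jk} = j/(j + k) when j + k ≠ 0 and α_{00} = 1/2. -/

import Mathlib

open Complex Finset intervalIntegral

noncomputable section AlphaMultiplier


lemma int_exp (m : ℤ) :
    (∫ θ in (0:ℝ)..(2*Real.pi), Complex.exp (m * θ * Complex.I))
    = if m = 0 then (2*Real.pi : ℂ) else 0 := by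
  split_ifs with h
  · simp [h]
  · have hc : (m : ℂ) * Complex.I ≠ 0 := by
      simp [Complex.I_ne_zero, h]
    have h2 : ∀ θ : ℝ, (m : ℂ) * θ * Complex.I = ((m:ℂ) * Complex.I) * θ := by
      intro θ; ring
    simp only [h2]
    rw [integral_exp_mul_complex hc]
    have : Complex.exp ((m:ℂ) * Complex.I * (2*Real.pi)) = 1 := by
      have := Complex.exp_int_mul_two_pi_mul_I m
      rw [← this]; congr 1; ring
    simp [this]

lemma count_lemma (r n : ℕ) :
    (∑ a ∈ range (r+1), ∑ b ∈ range (r+1), if (a:ℤ) - b - n = 0 then (1:ℂ) else 0)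
    = ((r+1-n : ℕ) : ℂ) := by
  have h1 : ∀ a b : ℕ, ((a:ℤ) - b - n = 0) = (a = b + n) := by
    intro a b; simp only [eq_iff_iff]; omega
  simp only [h1]
  rw [Finset.sum_comm]
  have h2 : ∀ b : ℕ, (∑ a ∈ range (r+1), if a = b + n then (1:ℂ) else 0)
      = if b + n < r + 1 then 1 else 0 := by
    intro b
    rw [Finset.sum_ite_eq' (range (r+1)) (b+n) (fun _ => (1:ℂ))]
    simp [Finset.mem_range]
  simp only [h2]
  rw [Finset.sum_boole]
  congr 1
  have : Finset.filter (fun b => b + n < r + 1) (range (r+1)) = range (r+1-n) := by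
    ext b; simp [Finset.mem_range]; omega
  rw [this, Finset.card_range]

lemma fejer_repr (φ : Polynomial ℂ) (Z : ℕ) (hZ : φ.natDegree < Z) (r : ℕ) (z : ℂ) :
    (2*Real.pi : ℂ) * ∑ n ∈ range Z, ((r+1 - n : ℕ) : ℂ) * φ.coeff n * z^n
    = ∫ θ in (0:ℝ)..(2*Real.pi),
        (∑ a ∈ range (r+1), Complex.exp (a*θ*Complex.I)) *
        (∑ b ∈ range (r+1), Complex.exp (-((b:ℂ)*θ*Complex.I))) *
        φ.eval (z * Complex.exp (-((θ:ℂ)*Complex.I))) := by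
  have hev : ∀ θ : ℝ, φ.eval (z * Complex.exp (-((θ:ℂ)*Complex.I)))
      = ∑ n ∈ range Z, φ.coeff n * z^n * Complex.exp (-((n:ℂ)*θ*Complex.I)) := by
    intro θ
    rw [Polynomial.eval_eq_sum_range' hZ]
    refine Finset.sum_congr rfl fun n _ => ?_
    rw [mul_pow, ← Complex.exp_nat_mul]
    ring_nf
  have hint : ∀ θ : ℝ,
      (∑ a ∈ range (r+1), Complex.exp (a*θ*Complex.I)) *
      (∑ b ∈ range (r+1), Complex.exp (-((b:ℂ)*θ*Complex.I))) *
      φ.eval (z * Complex.exp (-((θ:ℂ)*Complex.I)))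
      = ∑ a ∈ range (r+1), ∑ b ∈ range (r+1), ∑ n ∈ range Z,
          φ.coeff n * z^n * Complex.exp ((((a:ℤ) - b - n : ℤ) : ℂ) * θ * Complex.I) := by
    intro θ
    rw [hev θ, Finset.sum_mul_sum, Finset.sum_mul]
    refine Finset.sum_congr rfl fun a _ => ?_
    rw [Finset.sum_mul]
    refine Finset.sum_congr rfl fun b _ => ?_
    rw [Finset.mul_sum]
    refine Finset.sum_congr rfl fun n _ => ?_
    rw [show φ.coeff n * z^n * Complex.exp (-((n:ℂ)*θ*Complex.I))
        = Complex.exp (-((n:ℂ)*θ*Complex.I)) * (φ.coeff n * z^n) from by ring,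
      ← mul_assoc, ← Complex.exp_add, ← Complex.exp_add]
    rw [mul_comm]
    congr 2
    push_cast
    ring
  rw [intervalIntegral.integral_congr (fun θ _ => hint θ)]
  have h3 : ∀ (a b n : ℕ), IntervalIntegrable
      (fun θ : ℝ => φ.coeff n * z^n * Complex.exp ((((a:ℤ) - b - n : ℤ) : ℂ) * θ * Complex.I))
      MeasureTheory.volume 0 (2*Real.pi) := by
    intro a b n
    apply Continuous.intervalIntegrable
    fun_prop
  have h2i : ∀ (a b : ℕ), IntervalIntegrable
      (fun θ : ℝ => ∑ n ∈ range Z, φ.coeff n * z^n * Complex.exp ((((a:ℤ) - b - n : ℤ) : ℂ) * θ * Complex.I))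
      MeasureTheory.volume 0 (2*Real.pi) := by
    intro a b
    apply Continuous.intervalIntegrable
    fun_prop
  have h1i : ∀ (a : ℕ), IntervalIntegrable
      (fun θ : ℝ => ∑ b ∈ range (r+1), ∑ n ∈ range Z, φ.coeff n * z^n * Complex.exp ((((a:ℤ) - b - n : ℤ) : ℂ) * θ * Complex.I))
      MeasureTheory.volume 0 (2*Real.pi) := by
    intro a
    apply Continuous.intervalIntegrable
    fun_prop
  rw [intervalIntegral.integral_finset_sum (fun a _ => h1i a)]
  have step2 : ∀ a ∈ range (r+1),
      (∫ θ in (0:ℝ)..(2*Real.pi), ∑ b ∈ range (r+1), ∑ n ∈ range Z,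
        φ.coeff n * z^n * Complex.exp ((((a:ℤ) - b - n : ℤ) : ℂ) * θ * Complex.I))
      = ∑ b ∈ range (r+1), ∑ n ∈ range Z,
          φ.coeff n * z^n * (if ((a:ℤ) - b - n) = 0 then (2*Real.pi:ℂ) else 0) := by
    intro a _
    rw [intervalIntegral.integral_finset_sum (fun b _ => h2i a b)]
    refine Finset.sum_congr rfl fun b _ => ?_
    rw [intervalIntegral.integral_finset_sum (fun n _ => h3 a b n)]
    refine Finset.sum_congr rfl fun n _ => ?_
    rw [intervalIntegral.integral_const_mul, int_exp]
  rw [Finset.sum_congr rfl step2]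
  have swap1 : (∑ a ∈ range (r+1), ∑ b ∈ range (r+1), ∑ n ∈ range Z,
      φ.coeff n * z^n * (if ((a:ℤ) - b - n) = 0 then (2*Real.pi:ℂ) else 0))
      = ∑ n ∈ range Z, ∑ a ∈ range (r+1), ∑ b ∈ range (r+1),
      φ.coeff n * z^n * (if ((a:ℤ) - b - n) = 0 then (2*Real.pi:ℂ) else 0) := by
    rw [Finset.sum_congr rfl (fun a _ => Finset.sum_comm)]
    exact Finset.sum_comm
  rw [swap1, Finset.mul_sum]
  refine Finset.sum_congr rfl fun n _ => ?_
  have : ∀ a b : ℕ, (if ((a:ℤ) - b - n) = 0 then (2*Real.pi:ℂ) else 0)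
      = (2*Real.pi:ℂ) * (if ((a:ℤ) - b - n) = 0 then (1:ℂ) else 0) := by
    intro a b; split_ifs <;> simp
  simp only [this, ← Finset.mul_sum]
  rw [count_lemma]
  ring

lemma conj_DS (r : ℕ) (θ : ℝ) :
    (∑ b ∈ range (r+1), Complex.exp (-((b:ℂ)*θ*Complex.I)))
    = (starRingEnd ℂ) (∑ a ∈ range (r+1), Complex.exp (a*θ*Complex.I)) := by
  rw [map_sum]
  refine Finset.sum_congr rfl fun b _ => ?_
  rw [← Complex.exp_conj]
  congr 1
  simp [Complex.conj_I]

lemma prod_DS (r : ℕ) (θ : ℝ) :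
    (∑ a ∈ range (r+1), Complex.exp (a*θ*Complex.I)) *
    (∑ b ∈ range (r+1), Complex.exp (-((b:ℂ)*θ*Complex.I)))
    = ((‖∑ a ∈ range (r+1), Complex.exp (a*θ*Complex.I)‖^2 : ℝ) : ℂ) := by
  rw [conj_DS, Complex.mul_conj, Complex.normSq_eq_norm_sq]

lemma kernel_mass (r : ℕ) :
    (∫ θ in (0:ℝ)..(2*Real.pi), ‖∑ a ∈ range (r+1), Complex.exp (a*θ*Complex.I)‖^2)
    = 2*Real.pi*(r+1) := by
  have h := fejer_repr 1 1 (by simp) r 1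
  simp only [Polynomial.eval_one, mul_one, Polynomial.coeff_one_zero, one_pow] at h
  simp only [range_one, Finset.sum_singleton, Nat.sub_zero, mul_one] at h
  have h2 : (∫ θ in (0:ℝ)..(2*Real.pi),
      (∑ a ∈ range (r+1), Complex.exp (a*θ*Complex.I)) *
      (∑ b ∈ range (r+1), Complex.exp (-((b:ℂ)*θ*Complex.I))))
      = ((∫ θ in (0:ℝ)..(2*Real.pi), ‖∑ a ∈ range (r+1), Complex.exp (a*θ*Complex.I)‖^2 : ℝ) : ℂ) := by
    rw [← intervalIntegral.integral_ofReal]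
    exact intervalIntegral.integral_congr fun θ _ => prod_DS r θ
  rw [h2] at h
  have := h.symm
  have h3 : ((2*Real.pi*(r+1) : ℝ) : ℂ)
      = ((∫ θ in (0:ℝ)..(2*Real.pi), ‖∑ a ∈ range (r+1), Complex.exp (a*θ*Complex.I)‖^2 : ℝ) : ℂ) := by
    rw [this]; simp [Polynomial.coeff_one]
  exact (Complex.ofReal_inj.mp h3).symm

lemma fejer_bound (φ : Polynomial ℂ) (Z : ℕ) (hZ : φ.natDegree < Z) (r : ℕ) (z : ℂ)
    (hz : ‖z‖ = 1) (S : ℝ) (hS : ∀ w : ℂ, ‖w‖ = 1 → ‖φ.eval w‖ ≤ S) :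
    ‖∑ n ∈ range Z, ((r+1 - n : ℕ) : ℂ) * φ.coeff n * z^n‖ ≤ (r+1) * S := by
  have hπ : (0:ℝ) < 2*Real.pi := by positivity
  have key := fejer_repr φ Z hZ r z
  have hnormarg : ∀ θ : ℝ, ‖z * Complex.exp (-((θ:ℂ)*Complex.I))‖ = 1 := by
    intro θ
    rw [norm_mul, hz, one_mul]
    have : -((θ:ℂ)*Complex.I) = ((-θ : ℝ) : ℂ) * Complex.I := by push_cast; ring
    rw [this]
    exact Complex.norm_exp_ofReal_mul_I _
  have hb : ∀ θ ∈ Set.Icc (0:ℝ) (2*Real.pi),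
      ‖(∑ a ∈ range (r+1), Complex.exp (a*θ*Complex.I)) *
        (∑ b ∈ range (r+1), Complex.exp (-((b:ℂ)*θ*Complex.I))) *
        φ.eval (z * Complex.exp (-((θ:ℂ)*Complex.I)))‖
      ≤ ‖∑ a ∈ range (r+1), Complex.exp (a*θ*Complex.I)‖^2 * S := by
    intro θ _
    have h0 : (0:ℝ) ≤ ‖∑ a ∈ range (r+1), Complex.exp (a*θ*Complex.I)‖^2 := by positivity
    rw [norm_mul, prod_DS, Complex.norm_real, Real.norm_of_nonneg h0]
    exact mul_le_mul_of_nonneg_left (hS _ (hnormarg θ)) h0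
  have hI1 : IntervalIntegrable (fun θ : ℝ =>
      ‖(∑ a ∈ range (r+1), Complex.exp (a*θ*Complex.I)) *
        (∑ b ∈ range (r+1), Complex.exp (-((b:ℂ)*θ*Complex.I))) *
        φ.eval (z * Complex.exp (-((θ:ℂ)*Complex.I)))‖) MeasureTheory.volume 0 (2*Real.pi) := by
    apply Continuous.intervalIntegrable
    apply Continuous.norm
    fun_prop
  have hI2 : IntervalIntegrable (fun θ : ℝ =>
      ‖∑ a ∈ range (r+1), Complex.exp (a*θ*Complex.I)‖^2 * S) MeasureTheory.volume 0 (2*Real.pi) := by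
    apply Continuous.intervalIntegrable
    apply Continuous.mul _ continuous_const
    apply Continuous.pow
    apply Continuous.norm
    fun_prop
  have step : ‖(2*Real.pi : ℂ) * ∑ n ∈ range Z, ((r+1 - n : ℕ) : ℂ) * φ.coeff n * z^n‖
      ≤ 2*Real.pi*(r+1) * S := by
    rw [key]
    calc ‖∫ θ in (0:ℝ)..(2*Real.pi), _‖
        ≤ ∫ θ in (0:ℝ)..(2*Real.pi),
            ‖(∑ a ∈ range (r+1), Complex.exp (a*θ*Complex.I)) *
              (∑ b ∈ range (r+1), Complex.exp (-((b:ℂ)*θ*Complex.I))) *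
              φ.eval (z * Complex.exp (-((θ:ℂ)*Complex.I)))‖ :=
          intervalIntegral.norm_integral_le_integral_norm hπ.le
      _ ≤ ∫ θ in (0:ℝ)..(2*Real.pi), ‖∑ a ∈ range (r+1), Complex.exp (a*θ*Complex.I)‖^2 * S :=
          intervalIntegral.integral_mono_on hπ.le hI1 hI2 hb
      _ = (∫ θ in (0:ℝ)..(2*Real.pi), ‖∑ a ∈ range (r+1), Complex.exp (a*θ*Complex.I)‖^2) * S := by
          rw [intervalIntegral.integral_mul_const]
      _ = 2*Real.pi*(r+1) * S := by rw [kernel_mass]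
  rw [norm_mul] at step
  have h2 : ‖(2*Real.pi : ℂ)‖ = 2*Real.pi := by
    rw [show ((2*Real.pi : ℂ)) = ((2*Real.pi : ℝ) : ℂ) from by push_cast; ring,
      Complex.norm_real, Real.norm_of_nonneg hπ.le]
  rw [h2] at step
  nlinarith [norm_nonneg (∑ n ∈ range Z, ((r+1 - n : ℕ) : ℂ) * φ.coeff n * z^n)]


lemma coeff_bound (φ : Polynomial ℂ) (S : ℝ)
    (hS : ∀ w : ℂ, ‖w‖ = 1 → ‖φ.eval w‖ ≤ S) (n : ℕ) : ‖φ.coeff n‖ ≤ S := by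
  have hπ : (0:ℝ) < 2*Real.pi := by positivity
  set Z := max (φ.natDegree + 1) (n + 1) with hZdef
  have hZ : φ.natDegree < Z := lt_of_lt_of_le (Nat.lt_succ_self _) (le_max_left _ _)
  have hnZ : n < Z := lt_of_lt_of_le (Nat.lt_succ_self _) (le_max_right _ _)
  have hev : ∀ θ : ℝ, φ.eval (Complex.exp ((θ:ℂ)*Complex.I))
      = ∑ m ∈ range Z, φ.coeff m * Complex.exp ((m:ℂ)*θ*Complex.I) := by
    intro θ
    rw [Polynomial.eval_eq_sum_range' hZ]
    refine Finset.sum_congr rfl fun m _ => ?_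
    rw [← Complex.exp_nat_mul]
    ring_nf
  have key : (2*Real.pi : ℂ) * φ.coeff n
      = ∫ θ in (0:ℝ)..(2*Real.pi),
          Complex.exp (-((n:ℂ)*θ*Complex.I)) * φ.eval (Complex.exp ((θ:ℂ)*Complex.I)) := by
    have hint : ∀ θ : ℝ, Complex.exp (-((n:ℂ)*θ*Complex.I)) * φ.eval (Complex.exp ((θ:ℂ)*Complex.I))
        = ∑ m ∈ range Z, φ.coeff m * Complex.exp ((((m:ℤ) - n : ℤ):ℂ)*θ*Complex.I) := by
      intro θ
      rw [hev θ, Finset.mul_sum]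
      refine Finset.sum_congr rfl fun m _ => ?_
      rw [show Complex.exp (-((n:ℂ)*θ*Complex.I)) * (φ.coeff m * Complex.exp ((m:ℂ)*θ*Complex.I))
          = φ.coeff m * (Complex.exp ((m:ℂ)*θ*Complex.I) * Complex.exp (-((n:ℂ)*θ*Complex.I))) from by ring,
        ← Complex.exp_add]
      congr 2
      push_cast
      ring
    rw [intervalIntegral.integral_congr (fun θ _ => hint θ)]
    rw [intervalIntegral.integral_finset_sum (fun m _ => by
      apply Continuous.intervalIntegrable; fun_prop)]
    have : ∀ m ∈ range Z, (∫ θ in (0:ℝ)..(2*Real.pi),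
        φ.coeff m * Complex.exp ((((m:ℤ) - n : ℤ):ℂ)*θ*Complex.I))
        = φ.coeff m * (if ((m:ℤ) - n : ℤ) = 0 then (2*Real.pi:ℂ) else 0) := by
      intro m _
      rw [intervalIntegral.integral_const_mul, int_exp]
    rw [Finset.sum_congr rfl this]
    have h1 : ∀ m : ℕ, (((m:ℤ) - n : ℤ) = 0) = (m = n) := by
      intro m; simp only [eq_iff_iff]; omega
    simp only [h1]
    rw [Finset.sum_congr rfl (fun m _ => by
      rw [show (φ.coeff m * if m = n then (2*Real.pi:ℂ) else 0)
          = if m = n then (2*Real.pi:ℂ) * φ.coeff m else 0 from by split_ifs <;> ring])]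
    rw [Finset.sum_ite_eq' (range Z) n (fun m => (2*Real.pi:ℂ) * φ.coeff m)]
    simp [Finset.mem_range.mpr hnZ]
  have hb : ∀ θ ∈ Set.Icc (0:ℝ) (2*Real.pi),
      ‖Complex.exp (-((n:ℂ)*θ*Complex.I)) * φ.eval (Complex.exp ((θ:ℂ)*Complex.I))‖ ≤ S := by
    intro θ _
    rw [norm_mul]
    have e1 : ‖Complex.exp (-((n:ℂ)*θ*Complex.I))‖ = 1 := by
      rw [show -((n:ℂ)*θ*Complex.I) = ((-(n*θ) : ℝ):ℂ) * Complex.I from by push_cast; ring]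
      exact Complex.norm_exp_ofReal_mul_I _
    have e2 : ‖Complex.exp ((θ:ℂ)*Complex.I)‖ = 1 := Complex.norm_exp_ofReal_mul_I _
    rw [e1, one_mul]
    exact hS _ e2
  have step : ‖(2*Real.pi : ℂ) * φ.coeff n‖ ≤ 2*Real.pi * S := by
    rw [key]
    calc ‖∫ θ in (0:ℝ)..(2*Real.pi), _‖
        ≤ ∫ θ in (0:ℝ)..(2*Real.pi),
            ‖Complex.exp (-((n:ℂ)*θ*Complex.I)) * φ.eval (Complex.exp ((θ:ℂ)*Complex.I))‖ :=
          intervalIntegral.norm_integral_le_integral_norm hπ.le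
      _ ≤ ∫ θ in (0:ℝ)..(2*Real.pi), S := by
          refine intervalIntegral.integral_mono_on hπ.le ?_ ?_ hb
          · apply Continuous.intervalIntegrable; apply Continuous.norm; fun_prop
          · exact intervalIntegrable_const
      _ = 2*Real.pi * S := by simp [mul_comm]
  rw [norm_mul, show ‖(2*Real.pi : ℂ)‖ = 2*Real.pi from by
    rw [show ((2*Real.pi : ℂ)) = ((2*Real.pi : ℝ) : ℂ) from by push_cast; ring,
      Complex.norm_real, Real.norm_of_nonneg hπ.le]] at step
  nlinarith [norm_nonneg (φ.coeff n)]


lemma telescope (b : ℕ → ℝ) : ∀ (R : ℕ) (n : ℕ), n ≤ R + 1 →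
    ∑ r ∈ range (R+1), ((r+1-n : ℕ):ℝ) * (b r - 2*b (r+1) + b (r+2))
    = b n - b (R+1) - ((R+1-n : ℕ):ℝ) * (b (R+1) - b (R+2)) := by
  intro R
  induction R with
  | zero =>
    intro n hn
    interval_cases n <;> simp <;> ring
  | succ R ih =>
    intro n hn
    rw [Finset.sum_range_succ]
    rcases Nat.lt_or_ge n (R+2) with h | h
    · have hn' : n ≤ R + 1 := by omega
      rw [ih n hn']
      have c1 : ((R+1-n : ℕ):ℝ) = (R:ℝ) + 1 - n := by
        push_cast [Nat.cast_sub hn']; ring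
      have c2 : ((R+1+1-n : ℕ):ℝ) = (R:ℝ) + 2 - n := by
        push_cast [Nat.cast_sub (by omega : n ≤ R + 2)]; ring
      rw [c1, c2]
      ring_nf
    · have hn2 : n = R + 2 := by omega
      subst hn2
      have z1 : ((R+1+1-(R+2) : ℕ):ℝ) = 0 := by norm_num
      have z2 : ∑ r ∈ range (R+1), ((r+1-(R+2) : ℕ):ℝ) * (b r - 2*b (r+1) + b (r+2)) = 0 := by
        refine Finset.sum_eq_zero fun r hr => ?_
        rw [Finset.mem_range] at hr
        have : (r+1-(R+2) : ℕ) = 0 := by omega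
        rw [this]
        norm_num
      rw [z2, z1]
      ring


noncomputable def bseq (k n : ℕ) : ℝ := if n ≤ k+1 then 1 else (k:ℝ)/((n:ℝ)-1)

noncomputable def dseq (k r : ℕ) : ℝ := bseq k r - 2*bseq k (r+1) + bseq k (r+2)

lemma bseq_le (k n : ℕ) (hn : n ≤ k+1) : bseq k n = 1 := by
  unfold bseq; rw [if_pos hn]

lemma bseq_ge (k n : ℕ) (hk : 1 ≤ k) (hn : k+1 ≤ n) : bseq k n = (k:ℝ)/((n:ℝ)-1) := by
  unfold bseq; split_ifs with h
  · have hn' : n = k+1 := by omega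
    subst hn'
    have : ((k:ℝ)+1) - 1 = (k:ℝ) := by ring
    push_cast
    rw [this, div_self (by exact_mod_cast (by omega : k ≠ 0))]
  · rfl

lemma dseq_lt (k r : ℕ) (hr : r + 2 ≤ k + 1) : dseq k r = 0 := by
  unfold dseq
  rw [bseq_le k r (by omega), bseq_le k (r+1) (by omega), bseq_le k (r+2) hr]
  ring

lemma dseq_k (k : ℕ) (hk : 1 ≤ k) : dseq k k = -(1/((k:ℝ)+1)) := by
  unfold dseq
  rw [bseq_le k k (by omega), bseq_le k (k+1) (by omega), bseq_ge k (k+2) hk (by omega)]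
  have h1 : ((k:ℝ)+1) ≠ 0 := by positivity
  push_cast
  rw [show ((k:ℝ)+2)-1 = (k:ℝ)+1 from by ring]
  field_simp
  ring

lemma dseq_gt (k r : ℕ) (hk : 1 ≤ k) (hr : k+1 ≤ r) :
    dseq k r = (k:ℝ)/((r:ℝ)-1) - 2*(k:ℝ)/(r:ℝ) + (k:ℝ)/((r:ℝ)+1) := by
  unfold dseq
  rw [bseq_ge k r hk (by omega), bseq_ge k (r+1) hk (by omega), bseq_ge k (r+2) hk (by omega)]
  push_cast
  ring_nf

lemma dsum_bound (k R : ℕ) (hk : 1 ≤ k) (hkR : k+1 ≤ R) :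
    ∑ r ∈ range (R+1), |dseq k r| * ((r:ℝ)+1) ≤ 3 := by
  have hsplit : range (R+1) = Finset.Ico 0 (k+1) ∪ Finset.Ico (k+1) (R+1) := by
    rw [Finset.range_eq_Ico, ← Finset.Ico_union_Ico_eq_Ico (by omega : 0 ≤ k+1) (by omega : k+1 ≤ R+1)]
  rw [hsplit, Finset.sum_union (by
    apply Finset.Ico_disjoint_Ico_consecutive)]
  have part1 : ∑ r ∈ Finset.Ico 0 (k+1), |dseq k r| * ((r:ℝ)+1) = 1 := by
    rw [Finset.sum_Ico_succ_top (by omega : 0 ≤ k)]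
    have h0 : ∑ r ∈ Finset.Ico 0 k, |dseq k r| * ((r:ℝ)+1) = 0 := by
      refine Finset.sum_eq_zero fun r hr => ?_
      rw [Finset.mem_Ico] at hr
      rw [dseq_lt k r (by omega)]
      simp
    rw [h0, zero_add, dseq_k k hk]
    rw [abs_neg, _root_.abs_of_nonneg (by positivity)]
    field_simp
  rw [part1]
  have part2 : ∑ r ∈ Finset.Ico (k+1) (R+1), |dseq k r| * ((r:ℝ)+1) ≤ 2 := by
    have hconv : ∑ r ∈ Finset.Ico (k+1) (R+1), |dseq k r| * ((r:ℝ)+1)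
        = ∑ i ∈ range (R+1-(k+1)), |dseq k (k+1+i)| * (((k+1+i:ℕ):ℝ)+1) := by
      rw [Finset.sum_Ico_eq_sum_range]
    rw [hconv]
    have hterm : ∀ i : ℕ, |dseq k (k+1+i)| * (((k+1+i:ℕ):ℝ)+1)
        = 2*(k:ℝ) * ((((k+i:ℕ):ℝ))⁻¹ - (((k+i+1:ℕ):ℝ))⁻¹) := by
      intro i
      have hki : (0:ℝ) < (k:ℝ) + i := by positivity
      have hki1 : (0:ℝ) < (k:ℝ) + i + 1 := by positivity
      have hki2 : (0:ℝ) < (k:ℝ) + i + 2 := by positivity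
      have hd : dseq k (k+1+i) = 2*(k:ℝ)/(((k:ℝ)+i)*((k:ℝ)+i+1)*((k:ℝ)+i+2)) := by
        rw [dseq_gt k (k+1+i) hk (by omega)]
        rw [show ((k+1+i:ℕ):ℝ) = (k:ℝ)+i+1 from by push_cast; ring]
        rw [show (k:ℝ)+i+1-1 = (k:ℝ)+i from by ring]
        rw [show (k:ℝ)+i+1+1 = (k:ℝ)+i+2 from by ring]
        field_simp [hki.ne', hki1.ne', hki2.ne']
        ring
      rw [hd, _root_.abs_of_nonneg (by positivity)]
      rw [show ((k+1+i:ℕ):ℝ) = (k:ℝ)+i+1 from by push_cast; ring]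
      rw [show ((k+i:ℕ):ℝ) = (k:ℝ)+i from by push_cast; ring]
      rw [show ((k+i+1:ℕ):ℝ) = (k:ℝ)+i+1 from by push_cast; ring]
      field_simp [hki.ne', hki1.ne', hki2.ne']
      ring
    rw [Finset.sum_congr rfl (fun i _ => hterm i), ← Finset.mul_sum]
    have htel : ∑ i ∈ range (R+1-(k+1)), ((((k+i:ℕ):ℝ))⁻¹ - (((k+i+1:ℕ):ℝ))⁻¹)
        = (((k:ℕ):ℝ))⁻¹ - (((k+(R+1-(k+1)):ℕ):ℝ))⁻¹ := by
      have := Finset.sum_range_sub' (f := fun i => (((k+i:ℕ):ℝ))⁻¹) (n := R+1-(k+1))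
      simpa [add_assoc] using this
    rw [htel]
    have hb : (((k:ℕ):ℝ))⁻¹ - (((k+(R+1-(k+1)):ℕ):ℝ))⁻¹ ≤ ((k:ℝ))⁻¹ := by
      have : (0:ℝ) ≤ (((k+(R+1-(k+1)):ℕ):ℝ))⁻¹ := by positivity
      push_cast at this ⊢
      linarith
    calc 2*(k:ℝ) * ((((k:ℕ):ℝ))⁻¹ - (((k+(R+1-(k+1)):ℕ):ℝ))⁻¹)
        ≤ 2*(k:ℝ) * ((k:ℝ))⁻¹ := by
          apply mul_le_mul_of_nonneg_left hb (by positivity)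
      _ = 2 := by
          have hkne : (k:ℝ) ≠ 0 := by exact_mod_cast (by omega : k ≠ 0)
          field_simp
  linarith



lemma pointwise_pos (k : ℕ) (hk : 1 ≤ k) (φ : Polynomial ℂ) (z : ℂ) (hz : ‖z‖ = 1)
    (S : ℝ) (hS0 : 0 ≤ S) (hS : ∀ w : ℂ, ‖w‖ = 1 → ‖φ.eval w‖ ≤ S)
    (hC : ∀ n, ‖φ.coeff n‖ ≤ S) :
    ‖∑ j ∈ range (φ.natDegree + 1),
        ((if j + k = 0 then (1/2 : ℝ) else (j : ℝ) / ((j : ℝ) + (k : ℝ))) : ℂ) *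
          φ.coeff (j + k + 1) * z ^ j‖ ≤ 5 * S := by
  set D := φ.natDegree with hD
  set N := D + k + 1 with hN
  set R := 2*(k+1)*(N+1) with hR
  have hkR : k + 1 ≤ R := by
    calc k+1 ≤ 2*(k+1)*1 := by omega
    _ ≤ 2*(k+1)*(N+1) := Nat.mul_le_mul_left _ (by omega)
  have hNR : N ≤ R + 1 := by
    calc N ≤ 2*1*(N+1) := by omega
    _ ≤ 2*(k+1)*(N+1) + 1 := by
        have := Nat.mul_le_mul_right (N+1) (by omega : 2*1 ≤ 2*(k+1))
        omega
  set A := ∑ j ∈ range (D + 1),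
      ((if j + k = 0 then (1/2 : ℝ) else (j : ℝ) / ((j : ℝ) + (k : ℝ))) : ℂ) *
        φ.coeff (j + k + 1) * z ^ j with hA
  set T := ∑ n ∈ range (N+1), (((1 - bseq k n : ℝ)) : ℂ) * φ.coeff n * z^n with hT
  set B := ∑ n ∈ range (N+1), ((bseq k n : ℝ) : ℂ) * φ.coeff n * z^n with hB
  -- Step 1 : T = z^(k+1) * A
  have hTA : T = z^(k+1) * A := by
    rw [hT, Finset.range_eq_Ico,
      ← Finset.sum_Ico_consecutive _ (Nat.zero_le (k+1)) (by omega : k+1 ≤ N+1)]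
    have hzero : ∑ n ∈ Finset.Ico 0 (k+1), (((1 - bseq k n : ℝ)) : ℂ) * φ.coeff n * z^n = 0 := by
      refine Finset.sum_eq_zero fun n hn => ?_
      rw [Finset.mem_Ico] at hn
      rw [bseq_le k n (by omega)]
      norm_num
    rw [hzero, zero_add, Finset.sum_Ico_eq_sum_range]
    have hcount : N + 1 - (k+1) = D + 1 := by omega
    rw [hcount, hA, Finset.mul_sum]
    refine Finset.sum_congr rfl fun j hj => ?_
    have hcoef : (1 - bseq k (k+1+j) : ℝ) = (j : ℝ) / ((j : ℝ) + (k : ℝ)) := by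
      rcases Nat.eq_zero_or_pos j with hj0 | hj0
      · subst hj0
        rw [bseq_le k (k+1+0) (by omega)]
        norm_num
      · rw [bseq_ge k (k+1+j) hk (by omega)]
        rw [show ((k+1+j:ℕ):ℝ) - 1 = (k:ℝ)+j from by push_cast; ring]
        have hne : ((k:ℝ) + j) ≠ 0 := by positivity
        rw [add_comm (j:ℝ) k, eq_div_iff hne, sub_mul, one_mul, div_mul_cancel₀ _ hne]
        ring
    have hidx : k+1+j = j+k+1 := by omega
    rw [if_neg (by omega : ¬ j + k = 0), hcoef, hidx,
      show z^(j+k+1) = z^(k+1) * z^j from by ring]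
    push_cast
    ring
  -- Step 2 : T = eval - B
  have hTB : T = φ.eval z - B := by
    have heval : φ.eval z = ∑ n ∈ range (N+1), φ.coeff n * z^n :=
      Polynomial.eval_eq_sum_range' (by omega : φ.natDegree < N+1) z
    rw [hT, hB, heval, ← Finset.sum_sub_distrib]
    refine Finset.sum_congr rfl fun n _ => ?_
    push_cast
    ring
  -- Step 3 : decompose B
  set G : ℕ → ℂ := fun r => ∑ n ∈ range (N+1), ((r+1-n : ℕ) : ℂ) * φ.coeff n * z^n with hG
  set eseq : ℕ → ℝ := fun n =>
    bseq k (R+1) + ((R+1-n : ℕ):ℝ) * (bseq k (R+1) - bseq k (R+2)) with heseq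
  set E := ∑ n ∈ range (N+1), ((eseq n : ℝ) : ℂ) * φ.coeff n * z^n with hE
  have hBdec : B = (∑ r ∈ range (R+1), ((dseq k r : ℝ) : ℂ) * G r) + E := by
    have hb : ∀ n ∈ range (N+1), ((bseq k n : ℝ) : ℂ)
        = (∑ r ∈ range (R+1), ((r+1-n : ℕ):ℂ) * ((dseq k r : ℝ):ℂ)) + ((eseq n : ℝ):ℂ) := by
      intro n hn
      rw [Finset.mem_range] at hn
      have hreal := telescope (bseq k) R n (by omega)
      have hreal2 : bseq k n = (∑ r ∈ range (R+1), ((r+1-n : ℕ):ℝ) * dseq k r) + eseq n := by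
        rw [heseq]
        simp only [dseq] at hreal ⊢
        rw [hreal]
        ring
      rw [hreal2]
      push_cast
      rfl
    rw [hB, Finset.sum_congr rfl fun n hn => by rw [hb n hn]]
    rw [Finset.sum_congr rfl fun n _ => by rw [add_mul, add_mul]]
    rw [Finset.sum_add_distrib]
    congr 1
    rw [Finset.sum_congr rfl fun n _ => by rw [Finset.sum_mul, Finset.sum_mul]]
    rw [Finset.sum_comm]
    refine Finset.sum_congr rfl fun r _ => ?_
    rw [hG, Finset.mul_sum]
    refine Finset.sum_congr rfl fun n _ => ?_
    ring
  -- Bounds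
  have hGb : ∀ r : ℕ, ‖G r‖ ≤ ((r:ℝ)+1) * S := by
    intro r
    have := fejer_bound φ (N+1) (by omega) r z hz S hS
    rw [hG]
    exact_mod_cast this
  have hDsum : ‖∑ r ∈ range (R+1), ((dseq k r : ℝ) : ℂ) * G r‖ ≤ 3 * S := by
    calc ‖∑ r ∈ range (R+1), ((dseq k r : ℝ) : ℂ) * G r‖
        ≤ ∑ r ∈ range (R+1), ‖((dseq k r : ℝ) : ℂ) * G r‖ := norm_sum_le _ _
      _ ≤ ∑ r ∈ range (R+1), |dseq k r| * (((r:ℝ)+1) * S) := by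
          refine Finset.sum_le_sum fun r _ => ?_
          rw [norm_mul, Complex.norm_real, Real.norm_eq_abs]
          exact mul_le_mul_of_nonneg_left (hGb r) (abs_nonneg _)
      _ = (∑ r ∈ range (R+1), |dseq k r| * ((r:ℝ)+1)) * S := by
          rw [Finset.sum_mul]
          exact Finset.sum_congr rfl fun r _ => by ring
      _ ≤ 3 * S := mul_le_mul_of_nonneg_right (dsum_bound k R hk hkR) hS0
  have hRpos : (0:ℝ) < R := by
    have : 0 < R := by omega
    exact_mod_cast this
  have heb : ∀ n : ℕ, |eseq n| ≤ 2*(k:ℝ)/R := by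
    intro n
    have hb1 : bseq k (R+1) = (k:ℝ)/R := by
      rw [bseq_ge k (R+1) hk (by omega)]
      rw [show ((R+1:ℕ):ℝ) - 1 = (R:ℝ) from by push_cast; ring]
    have hb2 : bseq k (R+2) = (k:ℝ)/((R:ℝ)+1) := by
      rw [bseq_ge k (R+2) hk (by omega)]
      rw [show ((R+2:ℕ):ℝ) - 1 = (R:ℝ)+1 from by push_cast; ring]
    have hdiffpos : (0:ℝ) ≤ (k:ℝ)/R - (k:ℝ)/((R:ℝ)+1) := by
      have : (k:ℝ)/((R:ℝ)+1) ≤ (k:ℝ)/R :=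
        div_le_div_of_nonneg_left (by positivity) hRpos (by linarith)
      linarith
    have hcastle : ((R+1-n : ℕ):ℝ) ≤ (R:ℝ)+1 := by
      have : (R+1-n : ℕ) ≤ R+1 := by omega
      exact_mod_cast this
    have hkey : ((R:ℝ)+1) * ((k:ℝ)/R - (k:ℝ)/((R:ℝ)+1)) = (k:ℝ)/R := by
      field_simp
      ring
    have hnonneg : 0 ≤ eseq n := by
      rw [heseq, hb1, hb2]
      have : (0:ℝ) ≤ ((R+1-n : ℕ):ℝ) := by positivity
      have h2 : (0:ℝ) ≤ (k:ℝ)/R := by positivity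
      nlinarith
    rw [_root_.abs_of_nonneg hnonneg, heseq, hb1, hb2]
    have step : ((R+1-n : ℕ):ℝ) * ((k:ℝ)/R - (k:ℝ)/((R:ℝ)+1))
        ≤ ((R:ℝ)+1) * ((k:ℝ)/R - (k:ℝ)/((R:ℝ)+1)) :=
      mul_le_mul_of_nonneg_right hcastle hdiffpos
    rw [hkey] at step
    have : 2*(k:ℝ)/R = (k:ℝ)/R + (k:ℝ)/R := by ring
    rw [this]
    linarith
  have hEb : ‖E‖ ≤ S := by
    have hsum : ‖E‖ ≤ ∑ n ∈ range (N+1), (2*(k:ℝ)/R) * S := by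
      calc ‖E‖ ≤ ∑ n ∈ range (N+1), ‖((eseq n : ℝ) : ℂ) * φ.coeff n * z^n‖ := by
            rw [hE]; exact norm_sum_le _ _
        _ ≤ ∑ n ∈ range (N+1), (2*(k:ℝ)/R) * S := by
            refine Finset.sum_le_sum fun n _ => ?_
            rw [norm_mul, norm_mul, Complex.norm_real, Real.norm_eq_abs, norm_pow, hz, one_pow,
              mul_one]
            exact mul_le_mul (heb n) (hC n) (norm_nonneg _) (by positivity)
    rw [Finset.sum_const, Finset.card_range, nsmul_eq_mul] at hsum
    push_cast at hsum
    have h1 : (2*k)*(N+1) ≤ R := by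
      rw [hR]; exact Nat.mul_le_mul_right _ (by omega)
    have h1' : (2*(k:ℝ))*((N:ℝ)+1) ≤ (R:ℝ) := by exact_mod_cast h1
    have hfrac : ((N:ℝ)+1) * (2*(k:ℝ)/R) ≤ 1 := by
      rw [mul_div_assoc']
      rw [div_le_one hRpos]
      linarith
    calc ‖E‖ ≤ ((N:ℝ)+1) * (2*(k:ℝ)/R * S) := by
          have : ((N:ℝ)+1) = (D:ℝ) + k + 1 + 1 := by rw [hN]; push_cast; ring
          exact hsum
      _ = (((N:ℝ)+1) * (2*(k:ℝ)/R)) * S := by ring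
      _ ≤ 1 * S := mul_le_mul_of_nonneg_right hfrac hS0
      _ = S := one_mul S
  calc ‖A‖ = ‖T‖ := by rw [hTA, norm_mul, norm_pow, hz, one_pow, one_mul]
    _ = ‖φ.eval z - B‖ := by rw [hTB]
    _ ≤ ‖φ.eval z‖ + ‖B‖ := norm_sub_le _ _
    _ ≤ S + (3*S + S) := by
        have hBb : ‖B‖ ≤ 3*S + S := by
          rw [hBdec]; exact le_trans (norm_add_le _ _) (add_le_add hDsum hEb)
        exact add_le_add (hS z hz) hBb
    _ = 5 * S := by ring


lemma pointwise_zero (φ : Polynomial ℂ) (z : ℂ) (hz : ‖z‖ = 1)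
    (S : ℝ) (hS0 : 0 ≤ S) (hS : ∀ w : ℂ, ‖w‖ = 1 → ‖φ.eval w‖ ≤ S)
    (hC : ∀ n, ‖φ.coeff n‖ ≤ S) :
    ‖∑ j ∈ range (φ.natDegree + 1),
        ((if j + 0 = 0 then (1/2 : ℝ) else (j : ℝ) / ((j : ℝ) + ((0:ℕ) : ℝ))) : ℂ) *
          φ.coeff (j + 0 + 1) * z ^ j‖ ≤ 5 * S := by
  set D := φ.natDegree with hD
  set A := ∑ j ∈ range (D + 1),
      ((if j + 0 = 0 then (1/2 : ℝ) else (j : ℝ) / ((j : ℝ) + ((0:ℕ) : ℝ))) : ℂ) *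
        φ.coeff (j + 0 + 1) * z ^ j with hA
  have h1 : z * A = (∑ j ∈ range (D+1), φ.coeff (j+1) * z^(j+1))
      - (1/2 : ℂ) * φ.coeff 1 * z := by
    rw [hA, Finset.mul_sum]
    have hterm : ∀ j ∈ range (D+1),
        z * (((if j + 0 = 0 then (1/2 : ℝ) else (j : ℝ) / ((j : ℝ) + ((0:ℕ) : ℝ))) : ℂ) *
          φ.coeff (j + 0 + 1) * z ^ j)
        = φ.coeff (j+1) * z^(j+1) - (if j = 0 then (1/2 : ℂ) * φ.coeff 1 * z else 0) := by
      intro j _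
      rcases Nat.eq_zero_or_pos j with hj0 | hj0
      · subst hj0; norm_num; ring
      · rw [if_neg (by omega), if_neg (by omega)]
        have hjne : (((j:ℝ)):ℂ) ≠ 0 := by
          exact_mod_cast (Nat.cast_ne_zero.mpr (by omega : j ≠ 0) : (j:ℝ) ≠ 0)
        simp only [Nat.cast_zero, Complex.ofReal_zero, add_zero, div_self hjne]
        rw [show j + 0 + 1 = j + 1 from rfl]
        ring
    rw [Finset.sum_congr rfl hterm, Finset.sum_sub_distrib]
    congr 1
    rw [Finset.sum_ite_eq' (range (D+1)) 0 (fun _ => (1/2 : ℂ) * φ.coeff 1 * z)]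
    simp
  have h2 : (∑ j ∈ range (D+1), φ.coeff (j+1) * z^(j+1)) = φ.eval z - φ.coeff 0 := by
    have heval : φ.eval z = ∑ n ∈ range (D+2), φ.coeff n * z^n :=
      Polynomial.eval_eq_sum_range' (by omega : φ.natDegree < D+2) z
    have := Finset.sum_range_succ' (fun n => φ.coeff n * z^n) (D+1)
    rw [heval, this]
    simp
  have hnormA : ‖A‖ = ‖z * A‖ := by rw [norm_mul, hz, one_mul]
  rw [hnormA, h1, h2]
  have c0 := hC 0
  have c1 := hC 1
  have heval := hS z hz
  calc ‖φ.eval z - φ.coeff 0 - (1/2 : ℂ) * φ.coeff 1 * z‖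
      ≤ ‖φ.eval z - φ.coeff 0‖ + ‖(1/2 : ℂ) * φ.coeff 1 * z‖ := norm_sub_le _ _
    _ ≤ (‖φ.eval z‖ + ‖φ.coeff 0‖) + ‖(1/2 : ℂ) * φ.coeff 1 * z‖ := by
        have := norm_sub_le (φ.eval z) (φ.coeff 0)
        linarith
    _ ≤ (S + S) + (1/2) * S := by
        have : ‖(1/2 : ℂ) * φ.coeff 1 * z‖ = (1/2) * ‖φ.coeff 1‖ := by
          rw [norm_mul, norm_mul, hz, mul_one]
          norm_num
        rw [this]
        have : (1/2 : ℝ) * ‖φ.coeff 1‖ ≤ (1/2) * S := by linarith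
        linarith
    _ ≤ 5 * S := by linarith


end AlphaMultiplier


/-- There is an absolute constant `c > 0` such that for every `k ≥ 0` and every analytic
polynomial `φ`,
`sup_{|z|=1} |Σ_{j≥0} α_{jk}·φ̂(j+k+1)·z^j| ≤ c·sup_{|z|=1} |φ(z)|`, where
`α_{jk} = j/(j+k)` for `j+k ≠ 0` and `α_{00} = 1/2`. (The sum is finite since
`φ̂(j+k+1) = 0` for `j > deg φ`.) -/
theorem alpha_multiplier_bound :
    ∃ c : ℝ, 0 < c ∧
      ∀ (k : ℕ) (φ : Polynomial ℂ),
        (⨆ z : Metric.sphere (0 : ℂ) 1,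
            ‖∑ j ∈ Finset.range (φ.natDegree + 1),
              ((if j + k = 0 then (1 / 2 : ℝ) else (j : ℝ) / ((j : ℝ) + (k : ℝ))) : ℂ) *
                φ.coeff (j + k + 1) * (z : ℂ) ^ j‖)
          ≤ c * ⨆ z : Metric.sphere (0 : ℂ) 1, ‖φ.eval (z : ℂ)‖ := by
  refine ⟨5, by norm_num, ?_⟩
  intro k φ
  haveI : Nonempty (Metric.sphere (0 : ℂ) 1) := ⟨⟨1, by simp⟩⟩
  set S := ⨆ z : Metric.sphere (0 : ℂ) 1, ‖φ.eval (z : ℂ)‖ with hSdef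
  have hbdd : BddAbove (Set.range fun z : Metric.sphere (0:ℂ) 1 => ‖φ.eval (z:ℂ)‖) := by
    have hcomp : IsCompact (Metric.sphere (0:ℂ) 1) := isCompact_sphere 0 1
    have himg : BddAbove ((fun w : ℂ => ‖φ.eval w‖) '' (Metric.sphere (0:ℂ) 1)) :=
      (hcomp.image_of_continuousOn ((Polynomial.continuous φ).norm.continuousOn)).bddAbove
    have hre : (Set.range fun z : Metric.sphere (0:ℂ) 1 => ‖φ.eval (z:ℂ)‖)
        = (fun w : ℂ => ‖φ.eval w‖) '' (Metric.sphere (0:ℂ) 1) := by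
      ext x
      constructor
      · rintro ⟨⟨w, hw⟩, rfl⟩; exact ⟨w, hw, rfl⟩
      · rintro ⟨w, hw, rfl⟩; exact ⟨⟨w, hw⟩, rfl⟩
    rw [hre]
    exact himg
  have hS : ∀ w : ℂ, ‖w‖ = 1 → ‖φ.eval w‖ ≤ S := by
    intro w hw
    have hwmem : w ∈ Metric.sphere (0:ℂ) 1 := by
      simp [Metric.mem_sphere, dist_eq_norm, hw]
    exact le_ciSup hbdd ⟨w, hwmem⟩
  have hS0 : 0 ≤ S := le_trans (norm_nonneg _) (hS 1 (by norm_num))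
  have hC : ∀ n, ‖φ.coeff n‖ ≤ S := coeff_bound φ S hS
  apply ciSup_le
  rintro ⟨z, hzmem⟩
  have hz : ‖z‖ = 1 := by
    simpa [Metric.mem_sphere, dist_eq_norm] using hzmem
  rcases Nat.eq_zero_or_pos k with hk0 | hk
  · subst hk0
    exact pointwise_zero φ z hz S hS0 hS hC
  · exact pointwise_pos k hk φ z hz S hS0 hS hC
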